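/- Fix an integer p > 0. The sequence (c_{p,m})_{0 ≤ m ≤ p} is symmetric and unimodal: c_{p,m} = c_{p,p−m} for all 0 ≤ m ≤ p, and c_{p,m−1} ≤ c_{p,m} whenever 1 ≤ m and 2m ≤ p (hence, by symmetry, c_{p,m} ≥ c_{p,m+1} whenever 2m ≥ p and m+1 ≤ p). -/

import Mathlib

open Sum Matrix

/-- The corona graph `C_p` on vertices `v_1,…,v_p` (the `inl`s) and `w_1,…,w_p` (the `inr`s):
the `v_i` form a complete graph (internal edges) and each `v_i` is joined
to `w_i` (pendant edges). -/
def corona (p : ℕ) : SimpleGraph (Fin p ⊕ Fin p) where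
  Adj x y :=
    (∃ i j : Fin p, i ≠ j ∧ x = inl i ∧ y = inl j) ∨
    (∃ i : Fin p, x = inl i ∧ y = inr i) ∨
    (∃ i : Fin p, x = inr i ∧ y = inl i)
  symm := by
    constructor
    rintro x y (⟨i, j, hij, rfl, rfl⟩ | ⟨i, rfl, rfl⟩ | ⟨i, rfl, rfl⟩)
    · exact Or.inl ⟨j, i, hij.symm, rfl, rfl⟩
    · exact Or.inr (Or.inr ⟨i, rfl, rfl⟩)
    · exact Or.inr (Or.inl ⟨i, rfl, rfl⟩)
  loopless := by
    constructor
    rintro x (⟨i, j, hij, rfl, h⟩ | ⟨i, rfl, h⟩ | ⟨i, rfl, h⟩)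
    · exact hij (by simpa using h)
    · simp at h
    · simp at h

/-- `s` is an `m`-matching of the graph `G`: a set of `m` edges of `G`,
no two of which share a vertex. -/
def IsNMatching {V : Type*} (G : SimpleGraph V) (m : ℕ) (s : Finset (Sym2 V)) : Prop :=
  s.card = m ∧ (∀ e ∈ s, e ∈ G.edgeSet) ∧
    ∀ e ∈ s, ∀ f ∈ s, e ≠ f → ∀ v : V, v ∈ e → v ∉ f

/-- An edge of the corona graph is internal if both of its endpoints are `v`-vertices. -/
def isInternal {p : ℕ} (e : Sym2 (Fin p ⊕ Fin p)) : Prop :=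
  ∀ v ∈ e, Sum.isLeft v = true

open Classical in
/-- `c_{p,m}`: the sum, over the `m`-matchings `S` of the corona graph `C_p`, of `2^{i(S)}`,
where `i(S)` is the number of internal edges of `S`; equivalently, the number of
`m`-matchings of the double corona graph `C_p^{(2)}`. (For `m = 0` this is `1`, and it is
`0` whenever `C_p` has no `m`-matching.) -/
noncomputable def cNum (p m : ℕ) : ℕ :=
  ∑ s ∈ Finset.univ.filter (fun s : Finset (Sym2 (Fin p ⊕ Fin p)) =>
      IsNMatching (corona p) m s),
    2 ^ (s.filter (fun e => isInternal e)).card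

namespace CoronaAux

open Finset Nat

attribute [local instance] Classical.propDecidable

variable {p m : ℕ}

abbrev V (p : ℕ) := Fin p ⊕ Fin p

/-- pendant edge at `i` -/
def pe (i : Fin p) : Sym2 (V p) := s(Sum.inl i, Sum.inr i)

/-- internal edge from `i` to `g i` -/
def ie (g : Fin p → Fin p) (i : Fin p) : Sym2 (V p) := s(Sum.inl i, Sum.inl (g i))

/-- edge `{i,j}` is in `sm` and oriented `i → j` according to the "color" set `A`. -/
def oriented (sm A : Finset (Sym2 (V p))) (i j : Fin p) : Prop :=
  s(Sum.inl i, Sum.inl j) ∈ sm ∧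
    ((i < j ∧ s(Sum.inl i, Sum.inl j) ∈ A) ∨ (j < i ∧ s(Sum.inl i, Sum.inl j) ∉ A))

noncomputable def pend (sm : Finset (Sym2 (V p))) : Finset (Fin p) :=
  univ.filter (fun i => pe i ∈ sm)

noncomputable def src (sm A : Finset (Sym2 (V p))) : Finset (Fin p) :=
  univ.filter (fun i => ∃ j, oriented sm A i j)

noncomputable def gfun (sm A : Finset (Sym2 (V p))) : Fin p → Fin p := fun i =>
  if h : ∃ j, oriented sm A i j then h.choose else i

/-- the triples finset -/
noncomputable def W (p m : ℕ) : Finset (Finset (Fin p) × Finset (Fin p) × (Fin p → Fin p)) :=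
  univ.filter (fun q => q.1.card = m ∧ q.2.1 ⊆ q.1 ∧
    (∀ i, i ∉ q.2.1 → q.2.2 i = i) ∧ (∀ i ∈ q.2.1, q.2.2 i ∉ q.1) ∧ Set.InjOn q.2.2 q.2.1)

/-- colored matchings -/
noncomputable def S (p m : ℕ) : Finset (Finset (Sym2 (V p)) × Finset (Sym2 (V p))) :=
  univ.filter (fun x => IsNMatching (corona p) m x.1 ∧
    x.2 ⊆ x.1.filter (fun e => isInternal e))

noncomputable def sOf (M K : Finset (Fin p)) (g : Fin p → Fin p) : Finset (Sym2 (V p)) :=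
  ((M \ K).image pe) ∪ (K.image (ie g))

noncomputable def AOf (K : Finset (Fin p)) (g : Fin p → Fin p) : Finset (Sym2 (V p)) :=
  (K.filter (fun i => i < g i)).image (ie g)

/-! ### basic edge lemmas -/

lemma pe_ne_ie (i i' : Fin p) (g : Fin p → Fin p) : pe i ≠ ie g i' := by
  simp [pe, ie, Sym2.eq_iff]

lemma pe_inj : Function.Injective (pe (p := p)) := by
  intro i j h
  simp only [pe, Sym2.eq_iff] at h
  rcases h with ⟨h, -⟩ | ⟨h, -⟩ <;> simp_all

lemma isInternal_ie (g : Fin p → Fin p) (i : Fin p) : isInternal (ie g i) := by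
  intro v hv
  rw [ie, Sym2.mem_iff] at hv
  rcases hv with rfl | rfl <;> rfl

lemma isInternal_inl (i j : Fin p) : isInternal (s(Sum.inl i, Sum.inl j) : Sym2 (V p)) := by
  intro v hv
  rw [Sym2.mem_iff] at hv
  rcases hv with rfl | rfl <;> rfl

lemma not_isInternal_pe (i : Fin p) : ¬ isInternal (pe i) := by
  intro h
  have := h (Sum.inr i) (by rw [pe, Sym2.mem_iff]; right; rfl)
  simp at this

lemma mem_edgeSet_corona {e : Sym2 (V p)} :
    e ∈ (corona p).edgeSet ↔
      (∃ i j : Fin p, i ≠ j ∧ e = s(Sum.inl i, Sum.inl j)) ∨ (∃ i, e = pe i) := by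
  induction e using Sym2.ind with
  | _ a b =>
    rw [SimpleGraph.mem_edgeSet]
    constructor
    · rintro (⟨i, j, hij, rfl, rfl⟩ | ⟨i, rfl, rfl⟩ | ⟨i, rfl, rfl⟩)
      · exact Or.inl ⟨i, j, hij, rfl⟩
      · exact Or.inr ⟨i, rfl⟩
      · exact Or.inr ⟨i, Sym2.eq_swap⟩
    · rintro (⟨i, j, hij, he⟩ | ⟨i, he⟩)
      · rw [Sym2.eq_iff] at he
        rcases he with ⟨rfl, rfl⟩ | ⟨rfl, rfl⟩
        · exact Or.inl ⟨i, j, hij, rfl, rfl⟩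
        · exact Or.inl ⟨j, i, hij.symm, rfl, rfl⟩
      · rw [pe, Sym2.eq_iff] at he
        rcases he with ⟨rfl, rfl⟩ | ⟨rfl, rfl⟩
        · exact Or.inr (Or.inl ⟨i, rfl, rfl⟩)
        · exact Or.inr (Or.inr ⟨i, rfl, rfl⟩)

/-! ### matching lemmas -/

variable {sm A : Finset (Sym2 (V p))}

lemma matching_eq (hs : IsNMatching (corona p) m sm) {e f : Sym2 (V p)}
    (he : e ∈ sm) (hf : f ∈ sm) {v : V p} (hv : v ∈ e) (hv' : v ∈ f) : e = f := by
  by_contra hne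
  exact hs.2.2 e he f hf hne v hv hv'

lemma partner_unique (hs : IsNMatching (corona p) m sm) {i : Fin p} {u w : V p}
    (h1 : s(Sum.inl i, u) ∈ sm) (h2 : s(Sum.inl i, w) ∈ sm) : u = w := by
  have := matching_eq hs h1 h2 (v := Sum.inl i) (by simp) (by simp)
  exact Sym2.congr_right.mp this

lemma oriented_unique (hs : IsNMatching (corona p) m sm) {i j j' : Fin p}
    (h1 : oriented sm A i j) (h2 : oriented sm A i j') : j = j' := by
  have := partner_unique hs h1.1 h2.1
  exact Sum.inl.inj this

lemma oriented_asymm {i j : Fin p} (h1 : oriented sm A i j) (h2 : oriented sm A j i) : False := by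
  have hij : (s(Sum.inl i, Sum.inl j) : Sym2 (V p)) = s(Sum.inl j, Sum.inl i) := Sym2.eq_swap
  rcases h1.2 with ⟨hlt, hA⟩ | ⟨hlt, hA⟩ <;> rcases h2.2 with ⟨hlt', hA'⟩ | ⟨hlt', hA'⟩
  · exact absurd hlt (by omega)
  · exact hA' (hij ▸ hA)
  · exact hA (hij ▸ hA')
  · exact absurd hlt (by omega)

lemma gfun_eq {i j : Fin p} (h : oriented sm A i j) (hs : IsNMatching (corona p) m sm) :
    gfun sm A i = j := by
  rw [gfun, dif_pos ⟨j, h⟩]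
  exact oriented_unique hs (⟨j, h⟩ : ∃ j, oriented sm A i j).choose_spec h

lemma mem_src_iff {i : Fin p} : i ∈ src sm A ↔ ∃ j, oriented sm A i j := by
  simp [src]

lemma oriented_gfun_of_mem_src {i : Fin p} (hi : i ∈ src sm A) :
    oriented sm A i (gfun sm A i) := by
  rw [mem_src_iff] at hi
  rw [gfun, dif_pos hi]
  exact hi.choose_spec

lemma gfun_eq_self_of_not_mem {i : Fin p} (hi : i ∉ src sm A) : gfun sm A i = i := by
  rw [mem_src_iff] at hi
  rw [gfun, dif_neg hi]

section WithMatching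

variable (hs : IsNMatching (corona p) m sm) (hA : A ⊆ sm.filter (fun e => isInternal e))
include hs hA

lemma internal_filter_eq :
    sm.filter (fun e => isInternal e) = (src sm A).image (fun i => ie (gfun sm A) i) := by
  ext e
  simp only [mem_filter, mem_image, mem_src_iff]
  constructor
  · rintro ⟨he, hint⟩
    rcases mem_edgeSet_corona.mp (hs.2.1 e he) with ⟨i, j, hij, rfl⟩ | ⟨i, rfl⟩
    · have hswap : (s(Sum.inl j, Sum.inl i) : Sym2 (V p)) = s(Sum.inl i, Sum.inl j) :=
        Sym2.eq_swap
      rcases hij.lt_or_gt with hlt | hlt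
      · by_cases hA' : s(Sum.inl i, Sum.inl j) ∈ A
        · have hor : oriented sm A i j := ⟨he, Or.inl ⟨hlt, hA'⟩⟩
          exact ⟨i, ⟨j, hor⟩, by rw [ie, gfun_eq hor hs]⟩
        · have hor : oriented sm A j i :=
            ⟨hswap ▸ he, Or.inr ⟨hlt, by rwa [hswap]⟩⟩
          exact ⟨j, ⟨i, hor⟩, by rw [ie, gfun_eq hor hs, hswap]⟩
      · by_cases hA' : s(Sum.inl i, Sum.inl j) ∈ A
        · have hor : oriented sm A j i :=
            ⟨hswap ▸ he, Or.inl ⟨hlt, by rwa [hswap]⟩⟩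
          exact ⟨j, ⟨i, hor⟩, by rw [ie, gfun_eq hor hs, hswap]⟩
        · have hor : oriented sm A i j := ⟨he, Or.inr ⟨hlt, hA'⟩⟩
          exact ⟨i, ⟨j, hor⟩, by rw [ie, gfun_eq hor hs]⟩
    · exact absurd hint (not_isInternal_pe i)
  · rintro ⟨i, ⟨j, hor⟩, rfl⟩
    have h1 := gfun_eq hor hs
    refine ⟨?_, isInternal_inl _ _⟩
    rw [ie, h1]
    exact hor.1

omit hA in
lemma pendant_filter_eq :
    sm.filter (fun e => ¬ isInternal e) = (pend sm).image pe := by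
  ext e
  simp only [mem_filter, mem_image, pend, mem_univ, true_and]
  constructor
  · rintro ⟨he, hni⟩
    rcases mem_edgeSet_corona.mp (hs.2.1 e he) with ⟨i, j, hij, rfl⟩ | ⟨i, rfl⟩
    · exact absurd (isInternal_inl i j) hni
    · exact ⟨i, he, rfl⟩
  · rintro ⟨i, hi, rfl⟩
    exact ⟨hi, not_isInternal_pe i⟩

omit hA in
lemma pend_src_disjoint : Disjoint (pend sm) (src sm A) := by
  rw [Finset.disjoint_left]
  intro i hip his
  obtain ⟨j, hor⟩ := mem_src_iff.mp his
  replace hip : pe i ∈ sm := (Finset.mem_filter.mp hip).2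
  have := partner_unique hs hip hor.1
  simp at this

lemma ie_gfun_injOn : Set.InjOn (ie (gfun sm A)) (src sm A) := by
  intro i hi i' hi' h
  simp only [ie, Sym2.eq_iff] at h
  rcases h with ⟨h1, -⟩ | ⟨h1, h2⟩
  · exact Sum.inl.inj h1
  · exfalso
    have hori := oriented_gfun_of_mem_src (A := A) (by exact_mod_cast hi)
    have hori' := oriented_gfun_of_mem_src (A := A) (by exact_mod_cast hi')
    have e1 : gfun sm A i' = i := (Sum.inl.inj h1).symm
    have e2 : gfun sm A i = i' := Sum.inl.inj h2
    rw [e2] at hori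
    rw [e1] at hori'
    exact oriented_asymm hori hori'

lemma card_pend_src : (pend sm ∪ src sm A).card = m := by
  rw [card_union_of_disjoint (pend_src_disjoint hs)]
  have h1 : (pend sm).card = (sm.filter (fun e => ¬ isInternal e)).card := by
    rw [pendant_filter_eq hs, Finset.card_image_of_injective _ pe_inj]
  have h2 : (src sm A).card = (sm.filter (fun e => isInternal e)).card := by
    rw [internal_filter_eq hs hA, Finset.card_image_of_injOn (ie_gfun_injOn hs hA)]
  rw [h1, h2, Nat.add_comm, Finset.card_filter_add_card_filter_not, hs.1]

lemma gfun_not_mem {i : Fin p} (hi : i ∈ src sm A) :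
    gfun sm A i ∉ pend sm ∪ src sm A := by
  have hor := oriented_gfun_of_mem_src (A := A) hi
  set j := gfun sm A i with hj
  have hswap : (s(Sum.inl j, Sum.inl i) : Sym2 (V p)) = s(Sum.inl i, Sum.inl j) :=
    Sym2.eq_swap
  rw [Finset.mem_union]
  rintro (hp | hsrc)
  · replace hp : pe j ∈ sm := (Finset.mem_filter.mp hp).2
    have := partner_unique hs hp (hswap ▸ hor.1)
    simp at this
  · obtain ⟨j', hor'⟩ := mem_src_iff.mp hsrc
    have := partner_unique hs hor'.1 (hswap ▸ hor.1)
    rw [Sum.inl.inj this] at hor'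
    exact oriented_asymm hor hor'

lemma gfun_injOn : Set.InjOn (gfun sm A) (src sm A) := by
  intro i hi i' hi' h
  have hor := oriented_gfun_of_mem_src (A := A) (by exact_mod_cast hi)
  have hor' := oriented_gfun_of_mem_src (A := A) (by exact_mod_cast hi')
  rw [h] at hor
  set j := gfun sm A i' with hj
  have h1 : (s(Sum.inl j, Sum.inl i) : Sym2 (V p)) = s(Sum.inl i, Sum.inl j) := Sym2.eq_swap
  have h2 : (s(Sum.inl j, Sum.inl i') : Sym2 (V p)) = s(Sum.inl i', Sum.inl j) := Sym2.eq_swap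
  have := partner_unique hs (h1 ▸ hor.1) (h2 ▸ hor'.1)
  exact Sum.inl.inj this

end WithMatching

section WithTriple

variable {M K : Finset (Fin p)} {g : Fin p → Fin p}
  (hM : M.card = m) (hKM : K ⊆ M)
  (hg1 : ∀ i, i ∉ K → g i = i) (hg2 : ∀ i ∈ K, g i ∉ M) (hg3 : Set.InjOn g K)

include hKM hg2 in
lemma ie_injOn : Set.InjOn (ie g) K := by
  intro i hi i' hi' h
  simp only [ie, Sym2.eq_iff] at h
  rcases h with ⟨h1, -⟩ | ⟨h1, -⟩
  · exact Sum.inl.inj h1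
  · exact absurd (hKM (by exact_mod_cast hi)) ((Sum.inl.inj h1) ▸ hg2 i' (by exact_mod_cast hi'))

include hKM hg2 in
lemma mem_sOf_iff {e : Sym2 (V p)} :
    e ∈ sOf M K g ↔ (∃ i ∈ M \ K, e = pe i) ∨ (∃ i ∈ K, e = ie g i) := by
  simp only [sOf, Finset.mem_union, mem_image]
  constructor
  · rintro (⟨i, hi, rfl⟩ | ⟨i, hi, rfl⟩)
    · exact Or.inl ⟨i, hi, rfl⟩
    · exact Or.inr ⟨i, hi, rfl⟩
  · rintro (⟨i, hi, rfl⟩ | ⟨i, hi, rfl⟩)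
    · exact Or.inl ⟨i, hi, rfl⟩
    · exact Or.inr ⟨i, hi, rfl⟩

include hM hKM hg2 hg3 in
lemma sOf_matching : IsNMatching (corona p) m (sOf M K g) := by
  refine ⟨?_, ?_, ?_⟩
  · rw [sOf, card_union_of_disjoint, Finset.card_image_of_injective _ pe_inj,
      Finset.card_image_of_injOn (ie_injOn hKM hg2), Finset.card_sdiff_of_subset hKM]
    · have := Finset.card_le_card hKM
      omega
    · rw [Finset.disjoint_left]
      rintro e he he'
      obtain ⟨i, -, rfl⟩ := Finset.mem_image.mp he
      obtain ⟨i', -, h⟩ := Finset.mem_image.mp he'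
      exact pe_ne_ie i i' g h.symm
  · intro e he
    rcases (mem_sOf_iff hKM hg2).mp he with ⟨i, hi, rfl⟩ | ⟨i, hi, rfl⟩
    · exact mem_edgeSet_corona.mpr (Or.inr ⟨i, rfl⟩)
    · refine mem_edgeSet_corona.mpr (Or.inl ⟨i, g i, ?_, rfl⟩)
      intro h
      exact hg2 i hi (h ▸ hKM hi)
  · intro e he f hf hef v hv hvf
    rcases (mem_sOf_iff hKM hg2).mp he with ⟨i, hi, rfl⟩ | ⟨i, hi, rfl⟩ <;>
      rcases (mem_sOf_iff hKM hg2).mp hf with ⟨i', hi', rfl⟩ | ⟨i', hi', rfl⟩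
    · rw [pe, Sym2.mem_iff] at hv hvf
      rcases hv with rfl | rfl <;> rcases hvf with h | h <;>
        first
          | (exact hef (by rw [Sum.inl.inj h])) | (exact hef (by rw [Sum.inr.inj h]))
          | simp at h
    · rw [pe, Sym2.mem_iff] at hv
      rw [ie, Sym2.mem_iff] at hvf
      rw [Finset.mem_sdiff] at hi
      rcases hv with rfl | rfl <;> rcases hvf with h | h
      · exact hi.2 ((Sum.inl.inj h) ▸ hi')
      · exact hg2 i' hi' ((Sum.inl.inj h) ▸ hi.1)
      · simp at h
      · simp at h
    · rw [ie, Sym2.mem_iff] at hv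
      rw [pe, Sym2.mem_iff] at hvf
      rw [Finset.mem_sdiff] at hi'
      rcases hv with rfl | rfl <;> rcases hvf with h | h
      · exact hi'.2 ((Sum.inl.inj h).symm ▸ hi)
      · simp at h
      · exact hg2 i hi ((Sum.inl.inj h).symm ▸ hi'.1)
      · simp at h
    · rw [ie, Sym2.mem_iff] at hv hvf
      have hii' : i ≠ i' := fun h => hef (by rw [h])
      rcases hv with rfl | rfl <;> rcases hvf with h | h
      · exact hii' (Sum.inl.inj h)
      · exact hg2 i' hi' ((Sum.inl.inj h) ▸ hKM hi)
      · exact hg2 i hi ((Sum.inl.inj h).symm ▸ hKM hi')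
      · exact hii' (hg3 hi hi' (Sum.inl.inj h))

include hKM hg2 in
lemma AOf_subset : AOf K g ⊆ (sOf M K g).filter (fun e => isInternal e) := by
  intro e he
  obtain ⟨i, hi, rfl⟩ := Finset.mem_image.mp he
  rw [Finset.mem_filter] at hi ⊢
  exact ⟨(mem_sOf_iff hKM hg2).mpr (Or.inr ⟨i, hi.1, rfl⟩), isInternal_ie g i⟩

include hKM hg2 in
lemma pend_sOf : pend (sOf M K g) = M \ K := by
  ext i
  simp only [pend, mem_filter, mem_univ, true_and]
  rw [mem_sOf_iff hKM hg2]
  constructor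
  · rintro (⟨i', hi', h⟩ | ⟨i', hi', h⟩)
    · rwa [pe_inj h]
    · exact absurd h (pe_ne_ie i i' g)
  · intro hi
    exact Or.inl ⟨i, hi, rfl⟩

include hKM hg2 in
lemma oriented_sOf_of_mem {i : Fin p} (hi : i ∈ K) : oriented (sOf M K g) (AOf K g) i (g i) := by
  have hmem : ie g i ∈ sOf M K g := (mem_sOf_iff hKM hg2).mpr (Or.inr ⟨i, hi, rfl⟩)
  have hne : i ≠ g i := fun h => hg2 i hi (h ▸ hKM hi)
  refine ⟨hmem, ?_⟩
  rcases hne.lt_or_gt with hlt | hlt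
  · exact Or.inl ⟨hlt, Finset.mem_image.mpr ⟨i, Finset.mem_filter.mpr ⟨hi, hlt⟩, rfl⟩⟩
  · refine Or.inr ⟨hlt, fun hmemA => ?_⟩
    obtain ⟨i', hi', h⟩ := Finset.mem_image.mp hmemA
    rw [Finset.mem_filter] at hi'
    have := ie_injOn hKM hg2 hi'.1 hi h
    rw [this] at hi'
    omega

include hKM hg2 in
lemma oriented_sOf_iff {i j : Fin p} :
    oriented (sOf M K g) (AOf K g) i j ↔ i ∈ K ∧ j = g i := by
  constructor
  · rintro ⟨hmem, hor⟩
    rcases (mem_sOf_iff hKM hg2).mp hmem with ⟨i', -, h⟩ | ⟨i', hi', h⟩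
    · exfalso
      rw [pe, Sym2.eq_iff] at h
      rcases h with ⟨-, h2⟩ | ⟨h2, -⟩ <;> simp at h2
    · rw [ie, Sym2.eq_iff] at h
      rcases h with ⟨h1, h2⟩ | ⟨h1, h2⟩
      · exact ⟨(Sum.inl.inj h1) ▸ hi', by rw [Sum.inl.inj h2, Sum.inl.inj h1]⟩
      · exfalso
        have e1 : i = g i' := Sum.inl.inj h1
        have e2 : j = i' := Sum.inl.inj h2
        have hor2 := oriented_sOf_of_mem hKM hg2 hi'
        subst e1 e2
        exact oriented_asymm ⟨hmem, hor⟩ hor2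
  · rintro ⟨hi, rfl⟩
    exact oriented_sOf_of_mem hKM hg2 hi

include hKM hg2 in
lemma src_sOf : src (sOf M K g) (AOf K g) = K := by
  ext i
  rw [mem_src_iff]
  constructor
  · rintro ⟨j, hor⟩
    exact ((oriented_sOf_iff hKM hg2).mp hor).1
  · intro hi
    exact ⟨g i, oriented_sOf_of_mem hKM hg2 hi⟩

include hM hKM hg1 hg2 hg3 in
lemma gfun_sOf : gfun (sOf M K g) (AOf K g) = g := by
  funext i
  by_cases hi : i ∈ K
  · exact gfun_eq (oriented_sOf_of_mem hKM hg2 hi) (sOf_matching hM hKM hg2 hg3)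
  · rw [gfun_eq_self_of_not_mem (by rw [src_sOf hKM hg2]; exact hi), hg1 i hi]

end WithTriple

section LeftInv

variable {sm A : Finset (Sym2 (V p))}
variable (hs : IsNMatching (corona p) m sm) (hA : A ⊆ sm.filter (fun e => isInternal e))
include hs hA

lemma sOf_pend_src : sOf (pend sm ∪ src sm A) (src sm A) (gfun sm A) = sm := by
  rw [sOf, Finset.union_sdiff_cancel_right (pend_src_disjoint hs),
    ← pendant_filter_eq hs, ← internal_filter_eq hs hA]
  rw [Finset.union_comm]
  exact Finset.filter_union_filter_not_eq _ sm

lemma AOf_gfun : AOf (src sm A) (gfun sm A) = A := by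
  ext e
  constructor
  · intro he
    obtain ⟨i, hi, rfl⟩ := Finset.mem_image.mp he
    rw [Finset.mem_filter] at hi
    have hor := oriented_gfun_of_mem_src (A := A) hi.1
    rcases hor.2 with ⟨-, hmem⟩ | ⟨hlt, -⟩
    · exact hmem
    · exact absurd hi.2 (by omega)
  · intro he
    have he' := hA he
    rw [internal_filter_eq hs hA] at he'
    obtain ⟨i, hi, rfl⟩ := Finset.mem_image.mp he'
    have hor := oriented_gfun_of_mem_src (A := A) hi
    rcases hor.2 with ⟨hlt, -⟩ | ⟨-, hnA⟩
    · exact Finset.mem_image.mpr ⟨i, Finset.mem_filter.mpr ⟨hi, hlt⟩, rfl⟩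
    · exact absurd he hnA

end LeftInv

lemma mem_S_iff {x : Finset (Sym2 (V p)) × Finset (Sym2 (V p))} :
    x ∈ S p m ↔ IsNMatching (corona p) m x.1 ∧ x.2 ⊆ x.1.filter (fun e => isInternal e) := by
  simp [S]

lemma mem_W_iff {q : Finset (Fin p) × Finset (Fin p) × (Fin p → Fin p)} :
    q ∈ W p m ↔ q.1.card = m ∧ q.2.1 ⊆ q.1 ∧
      (∀ i, i ∉ q.2.1 → q.2.2 i = i) ∧ (∀ i ∈ q.2.1, q.2.2 i ∉ q.1) ∧
      Set.InjOn q.2.2 q.2.1 := by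
  simp [W]

lemma S_card_eq_W_card : (S p m).card = (W p m).card := by
  refine Finset.card_bij'
    (fun x _ => (pend x.1 ∪ src x.1 x.2, src x.1 x.2, gfun x.1 x.2))
    (fun q _ => (sOf q.1 q.2.1 q.2.2, AOf q.2.1 q.2.2)) ?_ ?_ ?_ ?_
  · intro x hx
    obtain ⟨hs, hA⟩ := mem_S_iff.mp hx
    refine mem_W_iff.mpr ⟨card_pend_src hs hA, Finset.subset_union_right, ?_, ?_, gfun_injOn hs hA⟩
    · intro i hi
      exact gfun_eq_self_of_not_mem hi
    · intro i hi
      exact gfun_not_mem hs hA hi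
  · intro q hq
    obtain ⟨hM, hKM, hg1, hg2, hg3⟩ := mem_W_iff.mp hq
    exact mem_S_iff.mpr ⟨sOf_matching hM hKM hg2 hg3, AOf_subset hKM hg2⟩
  · intro x hx
    obtain ⟨hs, hA⟩ := mem_S_iff.mp hx
    exact Prod.ext (sOf_pend_src hs hA) (AOf_gfun hs hA)
  · intro q hq
    obtain ⟨hM, hKM, hg1, hg2, hg3⟩ := mem_W_iff.mp hq
    refine Prod.ext ?_ (Prod.ext ?_ ?_)
    · show pend (sOf q.1 q.2.1 q.2.2) ∪ src _ _ = q.1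
      rw [pend_sOf hKM hg2, src_sOf hKM hg2, Finset.sdiff_union_of_subset hKM]
    · exact src_sOf hKM hg2
    · exact gfun_sOf hM hKM hg1 hg2 hg3

lemma cNum_eq_card_S : cNum p m = (S p m).card := by
  classical
  have hmap : ∀ x ∈ S p m, x.1 ∈ univ.filter (fun sm : Finset (Sym2 (V p)) =>
      IsNMatching (corona p) m sm) := by
    intro x hx
    simp [mem_filter, (mem_S_iff.mp hx).1]
  rw [Finset.card_eq_sum_card_fiberwise hmap]
  show cNum p m = _
  rw [cNum]
  refine Finset.sum_congr (by apply Finset.filter_congr_decidable) ?_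
  intro sm hsm
  rw [Finset.mem_filter] at hsm
  rw [← Finset.card_powerset]
  refine Finset.card_bij' (fun A _ => (sm, A)) (fun x _ => x.2) ?_ ?_ ?_ ?_
  · intro A hA
    rw [Finset.mem_powerset] at hA
    refine Finset.mem_filter.mpr ⟨mem_S_iff.mpr ⟨hsm.2, ?_⟩, rfl⟩
    intro e he
    have := hA he
    rwa [Finset.filter_congr_decidable] at this
  · intro x hx
    rw [Finset.mem_filter] at hx
    have := (mem_S_iff.mp hx.1).2
    rw [Finset.mem_powerset]
    intro e he
    have h2 := this he
    rw [hx.2] at h2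
    rwa [Finset.filter_congr_decidable]
  · intro A hA
    rfl
  · intro x hx
    rw [Finset.mem_filter] at hx
    exact Prod.ext hx.2.symm rfl

lemma card_fiber {M K : Finset (Fin p)} (hM : M.card = m) (hKM : K ⊆ M) :
    ((W p m).filter (fun q => q.1 = M ∧ q.2.1 = K)).card
      = (p - m).descFactorial K.card := by
  classical
  have hcompl : (Mᶜ : Finset (Fin p)).card = p - m := by
    rw [Finset.card_compl, hM, Fintype.card_fin]
  rw [← hcompl, ← Fintype.card_coe K, ← Fintype.card_coe (Mᶜ : Finset (Fin p)),
    ← Fintype.card_embedding_eq, ← Fintype.card_coe]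
  refine Fintype.card_congr
    { toFun := fun qq => ⟨fun x => ⟨qq.1.2.2 x.1, by
        have h := Finset.mem_filter.mp qq.2
        have hw := mem_W_iff.mp h.1
        rw [Finset.mem_compl]
        have hx := hw.2.2.2.1 x.1 (by rw [h.2.2]; exact x.2)
        rwa [h.2.1] at hx⟩, by
        intro x y hxy
        have h := Finset.mem_filter.mp qq.2
        have hw := mem_W_iff.mp h.1
        have hval : qq.1.2.2 x.1 = qq.1.2.2 y.1 := congrArg Subtype.val hxy
        have hxK : (x : Fin p) ∈ qq.1.2.1 := by rw [h.2.2]; exact x.2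
        have hyK : (y : Fin p) ∈ qq.1.2.1 := by rw [h.2.2]; exact y.2
        exact Subtype.ext (hw.2.2.2.2 hxK hyK hval)⟩,
      invFun := fun ff => ⟨(M, K, fun i => if h : i ∈ K then (ff ⟨i, h⟩ : Fin p) else i), by
        refine Finset.mem_filter.mpr ⟨mem_W_iff.mpr ⟨hM, hKM, ?_, ?_, ?_⟩, rfl, rfl⟩
        · intro i hi; exact dif_neg hi
        · intro i hi
          have hi' : i ∈ K := hi
          dsimp only
          rw [dif_pos hi']
          have := (ff ⟨i, hi'⟩).2
          rwa [Finset.mem_compl] at this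
        · intro x hx y hy hxy
          have hx' : x ∈ K := hx
          have hy' : y ∈ K := hy
          dsimp only at hxy
          rw [dif_pos hx', dif_pos hy'] at hxy
          have := ff.injective (Subtype.ext hxy)
          exact Subtype.ext_iff.mp this⟩,
      left_inv := by
        rintro ⟨q, hq⟩
        have h := Finset.mem_filter.mp hq
        have hw := mem_W_iff.mp h.1
        refine Subtype.ext (Prod.ext h.2.1.symm (Prod.ext h.2.2.symm ?_))
        funext i
        by_cases hi : i ∈ K
        · simp only [dif_pos hi]
          rfl
        · dsimp only
          rw [dif_neg hi]
          exact (hw.2.2.1 i (by rw [h.2.2]; exact hi)).symm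
      right_inv := by
        intro ff
        ext x
        simp [dif_pos x.2] }

lemma card_W_eq :
    (W p m).card = p.choose m * ∑ k ∈ range (m + 1), m.choose k * (p - m).descFactorial k := by
  classical
  have h1 : ∀ x ∈ W p m, x.1 ∈ (univ : Finset (Fin p)).powersetCard m := by
    intro x hx
    rw [Finset.mem_powersetCard_univ]
    exact (mem_W_iff.mp hx).1
  rw [Finset.card_eq_sum_card_fiberwise h1]
  have h2 : ∀ M ∈ (univ : Finset (Fin p)).powersetCard m,
      ((W p m).filter (fun q => q.1 = M)).card
        = ∑ k ∈ range (m + 1), m.choose k * (p - m).descFactorial k := by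
    intro M hMm
    rw [Finset.mem_powersetCard_univ] at hMm
    have h3 : ∀ q ∈ (W p m).filter (fun q => q.1 = M), q.2.1 ∈ M.powerset := by
      intro q hq
      rw [Finset.mem_filter] at hq
      rw [Finset.mem_powerset, ← hq.2]
      exact (mem_W_iff.mp hq.1).2.1
    rw [Finset.card_eq_sum_card_fiberwise h3]
    have h4 : ∀ K ∈ M.powerset,
        (((W p m).filter (fun q => q.1 = M)).filter (fun q => q.2.1 = K)).card
          = (p - m).descFactorial K.card := by
      intro K hK
      rw [Finset.filter_filter]
      exact card_fiber hMm (Finset.mem_powerset.mp hK)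
    rw [Finset.sum_congr rfl h4,
      Finset.sum_powerset_apply_card (fun k => (p - m).descFactorial k), hMm]
    simp [smul_eq_mul]
  rw [Finset.sum_congr rfl h2, Finset.sum_const, Finset.card_powersetCard, Finset.card_univ,
    Fintype.card_fin, smul_eq_mul]

lemma cNum_eq_f (p m : ℕ) :
    cNum p m = p.choose m * ∑ k ∈ range (m + 1), m.choose k * (p - m).descFactorial k := by
  rw [cNum_eq_card_S, S_card_eq_W_card, card_W_eq]

lemma sum_extend (m n d : ℕ) (hmn : m ≤ n) :
    ∑ k ∈ range (m + 1), m.choose k * d.descFactorial k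
      = ∑ k ∈ range (n + 1), m.choose k * d.descFactorial k := by
  refine Finset.sum_subset ?_ ?_
  · intro k hk
    rw [Finset.mem_range] at *
    omega
  · intro k hk hk'
    rw [Finset.mem_range] at hk hk'
    rw [Nat.choose_eq_zero_of_lt (by omega), Nat.zero_mul]

lemma cNum_symm (P M : ℕ) (hmp : M ≤ P) : cNum P M = cNum P (P - M) := by
  rw [cNum_eq_f, cNum_eq_f]
  rw [sum_extend M P _ hmp, sum_extend (P - M) P _ (by omega)]
  rw [Nat.choose_symm hmp]
  congr 1
  refine Finset.sum_congr rfl fun k _ => ?_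
  have h1 : P - (P - M) = M := by omega
  rw [h1, Nat.descFactorial_eq_factorial_mul_choose, Nat.descFactorial_eq_factorial_mul_choose]
  ring

lemma cNum_mono (P M : ℕ) (hm : 1 ≤ M) (h2m : 2 * M ≤ P) : cNum P (M - 1) ≤ cNum P M := by
  rw [cNum_eq_f, cNum_eq_f]
  rw [sum_extend (M - 1) P _ (by omega), sum_extend M P _ (by omega)]
  rw [Finset.mul_sum, Finset.mul_sum]
  refine Finset.sum_le_sum fun k hk => ?_
  rw [Finset.mem_range] at hk
  by_cases hkm : k ≤ M - 1
  · have hcpos : 0 < k ! * (M - k)! * (P - M + 1 - k)! := by positivity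
    have hpm1 : P - (M - 1) = P - M + 1 := by omega
    have e1 : (P - M + 1 - k)! * (P - M + 1).descFactorial k = (P - M + 1)! :=
      Nat.factorial_mul_descFactorial (by omega)
    have e2 : (M - 1).choose k * k ! * (M - 1 - k)! = (M - 1)! :=
      Nat.choose_mul_factorial_mul_factorial (by omega)
    have e3 : P.choose (M - 1) * (M - 1)! * (P - M + 1)! = P ! := by
      have := Nat.choose_mul_factorial_mul_factorial (show M - 1 ≤ P by omega)
      rwa [hpm1] at this
    have e4 : (M - k)! = (M - k) * (M - 1 - k)! := by
      have h : M - k = (M - 1 - k) + 1 := by omega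
      rw [h, Nat.factorial_succ]
    have e1' : (P - M - k)! * (P - M).descFactorial k = (P - M)! :=
      Nat.factorial_mul_descFactorial (by omega)
    have e2' : M.choose k * k ! * (M - k)! = M ! :=
      Nat.choose_mul_factorial_mul_factorial (by omega)
    have e3' : P.choose M * M ! * (P - M)! = P ! :=
      Nat.choose_mul_factorial_mul_factorial (by omega)
    have e4' : (P - M + 1 - k)! = (P - M + 1 - k) * (P - M - k)! := by
      have h : P - M + 1 - k = (P - M - k) + 1 := by omega
      rw [h, Nat.factorial_succ]
    have claim1 : P.choose (M - 1) * ((M - 1).choose k * (P - (M - 1)).descFactorial k) *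
        (k ! * (M - k)! * (P - M + 1 - k)!) = P ! * (M - k) := by
      rw [hpm1, e4]
      calc P.choose (M - 1) * ((M - 1).choose k * (P - M + 1).descFactorial k) *
            (k ! * ((M - k) * (M - 1 - k)!) * (P - M + 1 - k)!)
          = ((M - 1).choose k * k ! * (M - 1 - k)!) *
              ((P - M + 1 - k)! * (P - M + 1).descFactorial k) * P.choose (M - 1) *
              (M - k) := by ring
        _ = (M - 1)! * (P - M + 1)! * P.choose (M - 1) * (M - k) := by rw [e2, e1]
        _ = (P.choose (M - 1) * (M - 1)! * (P - M + 1)!) * (M - k) := by ring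
        _ = P ! * (M - k) := by rw [e3]
    have claim2 : P.choose M * (M.choose k * (P - M).descFactorial k) *
        (k ! * (M - k)! * (P - M + 1 - k)!) = P ! * (P - M + 1 - k) := by
      rw [e4']
      calc P.choose M * (M.choose k * (P - M).descFactorial k) *
            (k ! * (M - k)! * ((P - M + 1 - k) * (P - M - k)!))
          = (M.choose k * k ! * (M - k)!) * ((P - M - k)! * (P - M).descFactorial k) *
              P.choose M * (P - M + 1 - k) := by ring
        _ = M ! * (P - M)! * P.choose M * (P - M + 1 - k) := by rw [e2', e1']
        _ = (P.choose M * M ! * (P - M)!) * (P - M + 1 - k) := by ring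
        _ = P ! * (P - M + 1 - k) := by rw [e3']
    refine Nat.le_of_mul_le_mul_right ?_ hcpos
    rw [claim1, claim2]
    exact Nat.mul_le_mul_left _ (by omega)
  · rw [Nat.choose_eq_zero_of_lt (show M - 1 < k by omega)]
    simp

end CoronaAux

/-- For a fixed integer `p > 0`, the sequence `(c_{p,m})_{0 ≤ m ≤ p}` is
symmetric and unimodal: `c_{p,m} = c_{p,p-m}` for `0 ≤ m ≤ p`; `c_{p,m-1} ≤ c_{p,m}`
whenever `1 ≤ m` and `2m ≤ p`; and (by symmetry) `c_{p,m} ≥ c_{p,m+1}` whenever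
`2m ≥ p` and `m + 1 ≤ p`. -/
theorem cNum_symmetric_unimodal (p : ℕ) (hp : 0 < p) :
    (∀ m : ℕ, m ≤ p → cNum p m = cNum p (p - m)) ∧
    (∀ m : ℕ, 1 ≤ m → 2 * m ≤ p → cNum p (m - 1) ≤ cNum p m) ∧
    (∀ m : ℕ, p ≤ 2 * m → m + 1 ≤ p → cNum p (m + 1) ≤ cNum p m) := by
  refine ⟨fun m hm => CoronaAux.cNum_symm p m hm,
    fun m hm h2m => CoronaAux.cNum_mono p m hm h2m, ?_⟩
  intro m hpm hmp
  rw [CoronaAux.cNum_symm p (m + 1) hmp, CoronaAux.cNum_symm p m (by omega)]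
  have h3 := CoronaAux.cNum_mono p (p - m) (by omega) (by omega)
  have h4 : p - (m + 1) = p - m - 1 := by omega
  rw [h4]
  exact h3
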